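/- Let Λ be a finite dimensional hereditary algebra over an infinite field and let M be a rigid Λ-module (Ext^1_Λ(M,M) = 0) with projective presentation 0 → P → P' → M → 0. Then the set of all f ∈ Hom_Λ(P, P') with coker(f) ≅ M is a nonempty Zariski open subset of the affine space Hom_Λ(P, P'). -/

import Mathlib

/-- A function on a finite dimensional vector space is a polynomial (regular) function if
it is given by a multivariate polynomial in the coordinates with respect to a basis. -/
def IsPolynomialFun (K V : Type) [Field K] [AddCommGroup V] [Module K V]
    [FiniteDimensional K V] (σ : V → K) : Prop :=
  ∃ p : MvPolynomial (Fin (Module.finrank K V)) K,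
    ∀ v : V, σ v = MvPolynomial.eval (fun j => (Module.finBasis K V).repr v j) p

/-- `Ext¹_Λ(A, B) = 0`, encoded as: every short exact sequence
`0 → B → E → A → 0` of `Λ`-modules splits. -/
def ExtOneVanish (Λ : Type) [Ring Λ] (A : Type) [AddCommGroup A] [Module Λ A]
    (B : Type) [AddCommGroup B] [Module Λ B] : Prop :=
  ∀ (E : Type) (_ : AddCommGroup E) (_ : Module Λ E)
    (i : B →ₗ[Λ] E) (p : E →ₗ[Λ] A),
    Function.Injective i → Function.Surjective p →
    LinearMap.range i = LinearMap.ker p →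
    ∃ s : A →ₗ[Λ] E, p.comp s = LinearMap.id

section PolyFun
variable (K V : Type) [Field K] [AddCommGroup V] [Module K V] [FiniteDimensional K V]

noncomputable def coordFun : Fin (Module.finrank K V) → (V → K) :=
  fun j v => (Module.finBasis K V).repr v j

noncomputable def polyAlg : Subalgebra K (V → K) :=
  (MvPolynomial.aeval (coordFun K V)).range

variable {K V}

lemma aeval_coord_apply (p : MvPolynomial (Fin (Module.finrank K V)) K) (v : V) :
    (MvPolynomial.aeval (coordFun K V) p) v
      = MvPolynomial.eval (fun j => (Module.finBasis K V).repr v j) p := by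
  induction p using MvPolynomial.induction_on with
  | C a => simp
  | add p q hp hq => simp [hp, hq]
  | mul_X p j hp => simp [hp, coordFun]

lemma isPolynomialFun_of_mem {σ : V → K} (h : σ ∈ polyAlg K V) : IsPolynomialFun K V σ := by
  obtain ⟨p, hp⟩ := h
  refine ⟨p, fun v => ?_⟩
  have := aeval_coord_apply p v
  rw [← this]
  exact congrFun hp.symm v

lemma coordFun_mem (j : Fin (Module.finrank K V)) : coordFun K V j ∈ polyAlg K V :=
  ⟨MvPolynomial.X j, by simp⟩

lemma linear_mem_polyAlg {σ : V → K} (h : IsLinearMap K σ) : σ ∈ polyAlg K V := by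
  have key : σ = ∑ j, σ ((Module.finBasis K V) j) • coordFun K V j := by
    funext v
    have hv := (Module.finBasis K V).sum_repr v
    let σ' := IsLinearMap.mk' σ h
    have hσ : σ = ⇑σ' := rfl
    rw [hσ]
    calc σ' v = σ' (∑ j, ((Module.finBasis K V).repr v) j • (Module.finBasis K V) j) := by
          rw [hv]
      _ = ∑ j, ((Module.finBasis K V).repr v) j • σ' ((Module.finBasis K V) j) := by
          rw [map_sum]
          simp
      _ = _ := by
          simp [coordFun, Finset.sum_apply, smul_eq_mul, mul_comm]
  rw [key]
  exact Subalgebra.sum_mem _ fun j _ => Subalgebra.smul_mem _ (coordFun_mem j) _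

end PolyFun

section MatrixLemmas

open Matrix

variable {R S : Type*} [CommRing R] [CommRing S]

lemma map_matrix_mul {k l m : Type*} [Fintype l] (g : R →+* S)
    (A : Matrix k l R) (B : Matrix l m R) : (A * B).map g = A.map g * B.map g := by
  ext i j
  simp [Matrix.mul_apply, map_sum, _root_.map_mul]

lemma mulVec_mapRH {k l : Type*} [Fintype l] (g : R →+* S) (A : Matrix k l R) (v : l → R) :
    (A.map g).mulVec (fun i => g (v i)) = fun i => g (A.mulVec v i) := by
  funext i
  simp [Matrix.mulVec, dotProduct, map_sum, _root_.map_mul]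

variable {l w : ℕ}

/-- Cramer-style kernel vectors for a rectangular matrix. -/
noncomputable def kerVec (B : Matrix (Fin l) (Fin w) R) (I : Fin l → Fin w) (j : Fin w) :
    Fin w → R := fun r =>
  (if r = j then (B.submatrix id I).det else 0)
    - ∑ i, (if I i = r then ((B.submatrix id I).adjugate.mulVec (fun s => B s j)) i else 0)

lemma mulVec_kerVec (B : Matrix (Fin l) (Fin w) R) (I : Fin l → Fin w) (j : Fin w) :
    B.mulVec (kerVec B I j) = 0 := by
  funext s
  set C := B.submatrix id I with hC
  set x := C.adjugate.mulVec (fun s => B s j) with hx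
  have h1 : ∑ r, B s r * (if r = j then C.det else 0) = B s j * C.det := by
    rw [Finset.sum_eq_single j]
    · simp
    · intro b _ hb; simp [hb]
    · intro hj; exact absurd (Finset.mem_univ j) hj
  have h2 : ∀ r : Fin w, B s r * (∑ i, (if I i = r then x i else 0))
      = ∑ i, (if I i = r then B s (I i) * x i else 0) := by
    intro r
    rw [Finset.mul_sum]
    refine Finset.sum_congr rfl fun i _ => ?_
    by_cases h : I i = r
    · subst h; simp
    · simp [h]
  have h3 : ∑ r, ∑ i, (if I i = r then B s (I i) * x i else 0) = ∑ i, B s (I i) * x i := by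
    rw [Finset.sum_comm]
    refine Finset.sum_congr rfl fun i _ => ?_
    rw [Finset.sum_eq_single (I i)]
    · simp
    · intro b _ hb
      simp only [ite_eq_right_iff]
      intro h
      exact absurd h.symm hb
    · intro hni; exact absurd (Finset.mem_univ (I i)) hni
  have h4 : ∑ i, B s (I i) * x i = (C.mulVec x) s := by
    simp [Matrix.mulVec, dotProduct, hC]
  have h5 : C.mulVec x = C.det • fun s => B s j := by
    rw [hx, Matrix.mulVec_mulVec, Matrix.mul_adjugate, Matrix.smul_mulVec,
      Matrix.one_mulVec]
  show ∑ r, B s r * kerVec B I j r = 0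
  simp only [kerVec, mul_sub, Finset.sum_sub_distrib, h1, h2, h3, h4, h5, ← hC]
  simp only [← hx, h2, h3, h4, h5]
  simp [mul_comm]

lemma kerVec_off_range (B : Matrix (Fin l) (Fin w) R) (I : Fin l → Fin w) (j : Fin w)
    {r : Fin w} (hr : r ∉ Set.range I) :
    kerVec B I j r = if r = j then (B.submatrix id I).det else 0 := by
  unfold kerVec
  have : ∀ i : Fin l, I i ≠ r := fun i hi => hr ⟨i, hi⟩
  simp [this]

lemma kerVec_map (g : R →+* S) (B : Matrix (Fin l) (Fin w) R) (I : Fin l → Fin w) (j : Fin w) :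
    (fun r => g (kerVec B I j r)) = kerVec (B.map g) I j := by
  funext r
  unfold kerVec
  have hsub : (B.map g).submatrix id I = (B.submatrix id I).map g := rfl
  have hdet : g ((B.submatrix id I).det) = ((B.map g).submatrix id I).det := by
    rw [hsub]
    rw [RingHom.map_det g (B.submatrix id I), RingHom.mapMatrix_apply]
  have hadj : ((B.map g).submatrix id I).adjugate = ((B.submatrix id I).adjugate).map g := by
    rw [hsub]
    have := RingHom.map_adjugate g (B.submatrix id I)
    rw [RingHom.mapMatrix_apply, RingHom.mapMatrix_apply] at this
    exact this.symm
  rw [map_sub, map_sum]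
  congr 1
  · split
    · rw [hdet]
    · exact map_zero g
  · refine Finset.sum_congr rfl fun i _ => ?_
    split
    · rw [hadj]
      have : ((B.submatrix id I).adjugate.map g).mulVec (fun s => (B.map g) s j)
          = fun i => g (((B.submatrix id I).adjugate).mulVec (fun s => B s j) i) := by
        have := mulVec_mapRH g ((B.submatrix id I).adjugate) (fun s => B s j)
        convert this using 2
        rfl
      rw [this]
    · exact map_zero g

end MatrixLemmas

section FieldMatrix

open Matrix

variable {K : Type} [Field K] {l w : ℕ}

lemma kerVec_span (B : Matrix (Fin l) (Fin w) K) (I : Fin l → Fin w)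
    (hI : Function.Injective I) (hdet : (B.submatrix id I).det ≠ 0)
    (u : Fin w → K) (hu : B.mulVec u = 0) :
    ∃ t : Fin w → K, ∀ r, u r = ∑ j, t j * kerVec B I j r := by
  classical
  set d := (B.submatrix id I).det with hd
  set c : Fin w → K := fun j => if j ∈ Set.range I then 0 else u j with hc
  set D : Fin w → K := fun r => d * u r - ∑ j, c j * kerVec B I j r with hD
  have hDoff : ∀ r : Fin w, r ∉ Set.range I → D r = 0 := by
    intro r hr
    have hsum : ∑ j, c j * kerVec B I j r = c r * d := by
      have heach : ∀ j : Fin w, c j * kerVec B I j r = if r = j then c j * d else 0 := by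
        intro j
        rw [kerVec_off_range B I j hr]
        split <;> simp [hd]
      rw [Finset.sum_congr rfl fun j _ => heach j]
      rw [Finset.sum_eq_single r]
      · simp
      · intro b _ hb
        simp [Ne.symm hb]
      · intro hnr; exact absurd (Finset.mem_univ r) hnr
    have hcr : c r = u r := if_neg hr
    have hDr : D r = d * u r - ∑ j, c j * kerVec B I j r := rfl
    rw [hDr, hsum, hcr]
    ring
  have hDdef : D = d • u - ∑ j, c j • kerVec B I j := by
    funext r
    simp [hD, Finset.sum_apply, smul_eq_mul]
  have hDker : B.mulVec D = 0 := by
    have : B.mulVecLin D = 0 := by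
      rw [hDdef, map_sub, _root_.map_smul, map_sum]
      simp only [_root_.map_smul, Matrix.mulVecLin_apply, hu, mulVec_kerVec]
      simp
    simpa [Matrix.mulVecLin_apply] using this
  -- now show D vanishes on range I as well
  have hy : ∀ i : Fin l, D (I i) = 0 := by
    set y : Fin l → K := fun i => D (I i) with hyy
    have hmv : (B.submatrix id I).mulVec y = 0 := by
      funext s
      have h0 : (B.mulVec D) s = 0 := by rw [hDker]; rfl
      have hsum : ∑ r, B s r * D r = ∑ r ∈ Finset.univ.image I, B s r * D r := by
        symm
        refine Finset.sum_subset (Finset.subset_univ _) ?_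
        intro r _ hrim
        have : r ∉ Set.range I := by
          intro ⟨i, hi⟩
          exact hrim (Finset.mem_image.mpr ⟨i, Finset.mem_univ i, hi⟩)
        rw [hDoff r this, mul_zero]
      have himg : ∑ r ∈ Finset.univ.image I, B s r * D r = ∑ i, B s (I i) * D (I i) := by
        rw [Finset.sum_image (fun a _ b _ hab => hI hab)]
      have : ∑ i, B s (I i) * D (I i) = 0 := by
        rw [← himg, ← hsum]
        simpa [Matrix.mulVec, dotProduct] using h0
      simpa [Matrix.mulVec, dotProduct, hyy] using this
    by_contra hne
    push_neg at hne
    obtain ⟨i, hi⟩ := hne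
    have : ∃ v, v ≠ 0 ∧ (B.submatrix id I).mulVec v = 0 :=
      ⟨y, fun h0 => hi (by simpa using congrFun h0 i), hmv⟩
    rw [Matrix.exists_mulVec_eq_zero_iff] at this
    exact hdet this
  have hDzero : ∀ r, D r = 0 := by
    intro r
    by_cases hr : r ∈ Set.range I
    · obtain ⟨i, rfl⟩ := hr
      exact hy i
    · exact hDoff r hr
  refine ⟨fun j => d⁻¹ * c j, fun r => ?_⟩
  have h7 : d * u r - ∑ j, c j * kerVec B I j r = 0 := hDzero r
  have hdu : d * u r = ∑ j, c j * kerVec B I j r := sub_eq_zero.mp h7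
  have : u r = d⁻¹ * ∑ j, c j * kerVec B I j r := by
    field_simp
    rw [← hdu]; ring
  rw [this, Finset.mul_sum]
  refine Finset.sum_congr rfl fun j _ => by ring

lemma exists_good_cols (B : Matrix (Fin l) (Fin w) K)
    (hB : Function.Surjective B.mulVec) :
    ∃ I : Fin l → Fin w, Function.Injective I ∧ (B.submatrix id I).det ≠ 0 := by
  classical
  set col : Fin w → (Fin l → K) := fun j s => B s j with hcol
  have hmv : ∀ x : Fin w → K, B.mulVec x = ∑ j, x j • col j := by
    intro x
    funext s
    simp [Matrix.mulVec, dotProduct, hcol, Finset.sum_apply, mul_comm]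
  have hspan : Submodule.span K (Set.range col) = ⊤ := by
    rw [Submodule.eq_top_iff']
    intro y
    obtain ⟨x, rfl⟩ := hB y
    rw [hmv]
    exact Submodule.sum_mem _ fun j _ =>
      Submodule.smul_mem _ _ (Submodule.subset_span ⟨j, rfl⟩)
  obtain ⟨b, hbsub, hbspan, hbli⟩ := exists_linearIndependent K (Set.range col)
  rw [hspan] at hbspan
  have hbfin : b.Finite := hbli.setFinite
  haveI := hbfin.fintype
  have hbbasis : Module.Basis b K (Fin l → K) := Module.Basis.mk hbli (by
    rw [Subtype.range_coe, hbspan])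
  have hcard : Fintype.card b = l := by
    have := Module.finrank_eq_card_basis hbbasis
    rw [Module.finrank_fin_fun] at this
    omega
  let eqv : Fin l ≃ b := (Fintype.equivFinOfCardEq hcard).symm
  have hmem : ∀ i : Fin l, (↑(eqv i) : Fin l → K) ∈ Set.range col := fun i => hbsub (eqv i).2
  let I : Fin l → Fin w := fun i => (hmem i).choose
  have hIcol : ∀ i, col (I i) = ↑(eqv i) := fun i => (hmem i).choose_spec
  have hli : LinearIndependent K (fun i => col (I i)) := by
    have : (fun i => col (I i)) = (fun (x : b) => (x : Fin l → K)) ∘ eqv := by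
      funext i; rw [hIcol]; rfl
    rw [this]
    exact hbli.comp eqv (Equiv.injective eqv)
  have hIinj : Function.Injective I := by
    intro i i' h
    have : col (I i) = col (I i') := by rw [h]
    rw [hIcol, hIcol] at this
    exact eqv.injective (Subtype.coe_injective this)
  refine ⟨I, hIinj, ?_⟩
  intro hdet
  obtain ⟨v, hv0, hmv0⟩ := (Matrix.exists_mulVec_eq_zero_iff).mpr hdet
  have : ∑ i, v i • col (I i) = 0 := by
    funext s
    have := congrFun hmv0 s
    simpa [Matrix.mulVec, dotProduct, hcol, Finset.sum_apply, mul_comm] using this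
  have hall := linearIndependent_iff'.mp hli Finset.univ v this
  exact hv0 (funext fun i => hall i (Finset.mem_univ i))

end FieldMatrix

section DegreeBound

open MvPolynomial

lemma totalDegree_det_le {R σ : Type*} [CommRing R] {k : ℕ}
    (M : Matrix (Fin k) (Fin k) (MvPolynomial σ R)) (b : ℕ)
    (h : ∀ i j, (M i j).totalDegree ≤ b) : M.det.totalDegree ≤ k * b := by
  rw [Matrix.det_apply]
  refine (MvPolynomial.totalDegree_finset_sum _ _).trans ?_
  refine Finset.sup_le fun σp _ => ?_
  have h1 : (Equiv.Perm.sign σp • ∏ i, M (σp i) i).totalDegree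
      ≤ (∏ i, M (σp i) i).totalDegree := by
    rcases Int.units_eq_one_or (Equiv.Perm.sign σp) with h1 | h1 <;> rw [h1] <;>
      simp [Units.smul_def, MvPolynomial.totalDegree_neg]
  refine h1.trans ?_
  refine (MvPolynomial.totalDegree_finset_prod _ _).trans ?_
  calc ∑ i, (M (σp i) i).totalDegree ≤ ∑ _i : Fin k, b :=
        Finset.sum_le_sum fun i _ => h (σp i) i
    _ = k * b := by simp [Finset.sum_const, mul_comm]

end DegreeBound

section Rigidity

variable {Λ M P P' : Type} [Ring Λ]
  [AddCommGroup M] [Module Λ M] [AddCommGroup P] [Module Λ P]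
  [AddCommGroup P'] [Module Λ P']

/-- If `M` is rigid and `coker f ≅ M`, every map `P → M` lifts through `f`. -/
theorem lift_of_rigid (hrigid : ExtOneVanish Λ M M)
    (f : P →ₗ[Λ] P') (hf : Function.Injective f)
    (e : (P' ⧸ LinearMap.range f) ≃ₗ[Λ] M) (h : P →ₗ[Λ] M) :
    ∃ φ : P' →ₗ[Λ] M, φ.comp f = h := by
  classical
  set R : Submodule Λ (M × P') := LinearMap.range (h.prod (-f)) with hR
  set i : M →ₗ[Λ] ((M × P') ⧸ R) := R.mkQ.comp (LinearMap.inl Λ M P') with hi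
  set g₀ : M × P' →ₗ[Λ] M :=
    (e.toLinearMap.comp (LinearMap.range f).mkQ).comp (LinearMap.snd Λ M P') with hg₀
  have hRg : R ≤ LinearMap.ker g₀ := by
    rintro ⟨m, x⟩ ⟨y, hy⟩
    have hm : h y = m := congrArg Prod.fst hy
    have hx : -(f y) = x := congrArg Prod.snd hy
    have : g₀ (m, x) = e (Submodule.Quotient.mk x) := rfl
    rw [LinearMap.mem_ker, this, ← hx]
    have : (Submodule.Quotient.mk (-(f y)) : P' ⧸ LinearMap.range f) = 0 := by
      rw [Submodule.Quotient.mk_eq_zero]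
      exact neg_mem ⟨y, rfl⟩
    rw [this, map_zero]
  set p : ((M × P') ⧸ R) →ₗ[Λ] M := R.liftQ g₀ hRg with hp
  have hinj : Function.Injective i := by
    rw [← LinearMap.ker_eq_bot]
    rw [Submodule.eq_bot_iff]
    intro m hm
    rw [LinearMap.mem_ker] at hm
    have : ((m, 0) : M × P') ∈ R := by
      rwa [hi, LinearMap.comp_apply, Submodule.mkQ_apply,
        Submodule.Quotient.mk_eq_zero R] at hm
    obtain ⟨y, hy⟩ := this
    have hx : -(f y) = 0 := congrArg Prod.snd hy
    have hy0 : y = 0 := hf (by simpa using hx)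
    have := congrArg Prod.fst hy
    simp [hy0] at this
    exact this.symm
  have hsurj : Function.Surjective p := by
    intro m
    obtain ⟨z, hz⟩ := e.surjective m
    obtain ⟨x, hx⟩ := Submodule.mkQ_surjective (LinearMap.range f) z
    exact ⟨R.mkQ (0, x), by
      show g₀ (0, x) = m
      rw [hg₀]
      show e (Submodule.Quotient.mk x) = m
      rw [show (Submodule.Quotient.mk x : P' ⧸ LinearMap.range f) = z from hx, hz]⟩
  have hex : LinearMap.range i = LinearMap.ker p := by
    apply le_antisymm
    · rintro z ⟨m, rfl⟩
      rw [LinearMap.mem_ker]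
      show g₀ (m, 0) = 0
      rw [hg₀]
      show e (Submodule.Quotient.mk (0 : P')) = 0
      simp
    · rintro z hz
      obtain ⟨⟨m, x⟩, rfl⟩ := Submodule.mkQ_surjective R z
      rw [LinearMap.mem_ker] at hz
      have hz' : e (Submodule.Quotient.mk x) = 0 := hz
      have : (Submodule.Quotient.mk x : P' ⧸ LinearMap.range f) = 0 := by
        apply e.injective
        rw [hz', map_zero]
      rw [Submodule.Quotient.mk_eq_zero] at this
      obtain ⟨a, ha⟩ := this
      refine ⟨m + h a, ?_⟩
      rw [hi, LinearMap.comp_apply]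
      show R.mkQ (m + h a, 0) = R.mkQ (m, x)
      rw [Submodule.mkQ_apply, Submodule.mkQ_apply, Submodule.Quotient.eq]
      exact ⟨a, by simp [ha]⟩
  obtain ⟨s, hs⟩ := hrigid ((M × P') ⧸ R) inferInstance inferInstance i p hinj hsurj hex
  set j : P' →ₗ[Λ] ((M × P') ⧸ R) := R.mkQ.comp (LinearMap.inr Λ M P') with hj
  set ρ : P' →ₗ[Λ] ((M × P') ⧸ R) :=
    j - s.comp (e.toLinearMap.comp (LinearMap.range f).mkQ) with hρ
  have hpj : ∀ x : P', p (j x) = e (Submodule.Quotient.mk x) := fun x => rfl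
  have hps : ∀ m : M, p (s m) = m := fun m => by
    have := congrArg (fun g => g m) hs
    simpa using this
  have hran : ∀ x : P', ρ x ∈ LinearMap.range i := by
    intro x
    rw [hex, LinearMap.mem_ker]
    rw [hρ]
    simp only [LinearMap.sub_apply, LinearMap.comp_apply, map_sub]
    rw [hpj, hps]
    simp
  set iE := LinearEquiv.ofInjective i hinj with hiE
  set φ : P' →ₗ[Λ] M :=
    (iE.symm.toLinearMap).comp (ρ.codRestrict (LinearMap.range i) hran) with hφ
  have hiφ : ∀ x : P', i (φ x) = ρ x := by
    intro x
    have h1 : iE (φ x) = ρ.codRestrict (LinearMap.range i) hran x := by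
      rw [hφ]
      simp only [LinearMap.comp_apply, LinearEquiv.coe_coe]
      exact iE.apply_symm_apply _
    have h2 : (iE (φ x) : (M × P') ⧸ R) = i (φ x) := by
      rw [hiE]
      exact LinearEquiv.ofInjective_apply i (φ x)
    rw [← h2, h1]
    rfl
  have key : ∀ a : P, φ (f a) = h a := by
    intro a
    have h3 : ρ (f a) = j (f a) := by
      rw [hρ]
      simp only [LinearMap.sub_apply, LinearMap.comp_apply]
      have hz : (Submodule.Quotient.mk (f a) : P' ⧸ LinearMap.range f) = 0 := by
        rw [Submodule.Quotient.mk_eq_zero]; exact ⟨a, rfl⟩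
      rw [show ((LinearMap.range f).mkQ (f a)) = 0 from hz]
      simp
    have h4 : j (f a) = i (h a) := by
      show R.mkQ (0, f a) = R.mkQ (h a, 0)
      rw [Submodule.mkQ_apply, Submodule.mkQ_apply, Submodule.Quotient.eq]
      exact ⟨-a, by simp⟩
    exact hinj (by rw [hiφ (f a), h3, h4])
  exact ⟨φ, by ext a; simpa using key a⟩

end Rigidity

section QConstruction

open MvPolynomial

lemma totalDegree_X_le' {R σ : Type*} [CommSemiring R] (s : σ) :
    (MvPolynomial.X s : MvPolynomial σ R).totalDegree ≤ 1 := by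
  have h := MvPolynomial.totalDegree_monomial_le (Finsupp.single s 1) (1 : R)
  rw [MvPolynomial.X]
  refine h.trans ?_
  simp

variable {PA : Type*} [CommRing PA] {n1 n2 mu w lL : ℕ}

abbrev iotaT (n1 n2 mu w : ℕ) : Type :=
  (Fin n1 × Fin n2) ⊕ ((Fin w) ⊕ (Fin n2 × Fin mu))

noncomputable def Umt : Matrix (Fin n1) (Fin n2) (MvPolynomial (iotaT n1 n2 mu w) PA) :=
  Matrix.of fun i k => MvPolynomial.X (Sum.inl (i, k))

noncomputable def Smt : Matrix (Fin n2) (Fin mu) (MvPolynomial (iotaT n1 n2 mu w) PA) :=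
  Matrix.of fun k b => MvPolynomial.X (Sum.inr (Sum.inr (k, b)))

noncomputable def Tmt (Bpa : Matrix (Fin lL) (Fin w) PA)
    (mW : Fin w → Matrix (Fin mu) (Fin n2) PA) (I : Fin lL → Fin w) :
    Matrix (Fin mu) (Fin n2) (MvPolynomial (iotaT n1 n2 mu w) PA) :=
  Matrix.of fun a k => ∑ j, MvPolynomial.X (Sum.inr (Sum.inl j))
    * MvPolynomial.C (∑ r, kerVec Bpa I j r * mW r a k)

noncomputable def QIpoly (aP : Matrix (Fin n2) (Fin n1) PA)
    (Bpa : Matrix (Fin lL) (Fin w) PA)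
    (mW : Fin w → Matrix (Fin mu) (Fin n2) PA) (I : Fin lL → Fin w) :
    MvPolynomial (iotaT n1 n2 mu w) PA :=
  (HMul.hMul (self := Matrix.instHMulOfFintypeOfMulOfAddCommMonoid) Umt (aP.map MvPolynomial.C)).det
    * (HMul.hMul (self := Matrix.instHMulOfFintypeOfMulOfAddCommMonoid) (Tmt Bpa mW I) Smt).det

lemma QIpoly_hom {T : Type*} [CommRing T]
    (ψ : MvPolynomial (iotaT n1 n2 mu w) PA →+* T)
    (aP : Matrix (Fin n2) (Fin n1) PA) (Bpa : Matrix (Fin lL) (Fin w) PA)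
    (mW : Fin w → Matrix (Fin mu) (Fin n2) PA) (I : Fin lL → Fin w) :
    ψ (QIpoly aP Bpa mW I)
      = ((Umt.map ψ) * ((aP.map MvPolynomial.C).map ψ) : Matrix (Fin n1) (Fin n1) T).det
        * (((Tmt Bpa mW I).map ψ) * (Smt.map ψ) : Matrix (Fin mu) (Fin mu) T).det := by
  rw [QIpoly, map_mul]
  rw [RingHom.map_det, RingHom.map_det, RingHom.mapMatrix_apply, RingHom.mapMatrix_apply]
  rw [map_matrix_mul, map_matrix_mul]

lemma QIpoly_totalDegree (aP : Matrix (Fin n2) (Fin n1) PA)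
    (Bpa : Matrix (Fin lL) (Fin w) PA)
    (mW : Fin w → Matrix (Fin mu) (Fin n2) PA) (I : Fin lL → Fin w) :
    (QIpoly aP Bpa mW I).totalDegree ≤ n1 * 1 + mu * 2 := by
  refine (MvPolynomial.totalDegree_mul _ _).trans (add_le_add ?_ ?_)
  · refine totalDegree_det_le _ 1 ?_
    intro i j
    rw [Matrix.mul_apply]
    refine (MvPolynomial.totalDegree_finset_sum _ _).trans ?_
    refine Finset.sup_le fun k _ => ?_
    refine (MvPolynomial.totalDegree_mul _ _).trans ?_
    have h1 : (Umt (PA := PA) (mu := mu) (w := w) i k).totalDegree ≤ 1 :=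
      totalDegree_X_le' _
    have h2 : ((aP.map (MvPolynomial.C (σ := iotaT n1 n2 mu w))) k j).totalDegree = 0 := by
      simp [Matrix.map_apply, MvPolynomial.totalDegree_C]
    omega
  · refine totalDegree_det_le _ 2 ?_
    intro a b
    rw [Matrix.mul_apply]
    refine (MvPolynomial.totalDegree_finset_sum _ _).trans ?_
    refine Finset.sup_le fun k _ => ?_
    refine (MvPolynomial.totalDegree_mul _ _).trans ?_
    have h2 : (Smt (PA := PA) (n1 := n1) (w := w) k b).totalDegree ≤ 1 :=
      totalDegree_X_le' _
    have h1 : ((Tmt (n1 := n1) Bpa mW I) a k).totalDegree ≤ 1 := by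
      rw [Tmt, Matrix.of_apply]
      refine (MvPolynomial.totalDegree_finset_sum _ _).trans ?_
      refine Finset.sup_le fun j _ => ?_
      refine (MvPolynomial.totalDegree_mul _ _).trans ?_
      have := totalDegree_X_le'
        (R := PA) (Sum.inr (Sum.inl j) : iotaT n1 n2 mu w)
      have hc := MvPolynomial.totalDegree_C
        (σ := iotaT n1 n2 mu w) (∑ r, kerVec Bpa I j r * mW r a k)
      omega
    omega

lemma totalDegree_map_le' {R S σ : Type*} [CommSemiring R] [CommSemiring S]
    (g : R →+* S) (p : MvPolynomial σ R) :
    (MvPolynomial.map g p).totalDegree ≤ p.totalDegree := by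
  rw [MvPolynomial.totalDegree]
  apply Finset.sup_le
  intro d hd
  apply MvPolynomial.le_totalDegree
  rw [MvPolynomial.mem_support_iff] at hd ⊢
  intro h0
  apply hd
  rw [MvPolynomial.coeff_map, h0, map_zero]

end QConstruction

set_option maxHeartbeats 2000000
set_option synthInstance.maxHeartbeats 400000

open Module MvPolynomial in
/-- Let `Λ` be a finite dimensional hereditary algebra over an infinite
field `K`, and let `M` be a rigid `Λ`-module (`Ext¹_Λ(M,M) = 0`) with projective
presentation `0 → P → P' → M → 0`.  Then the set of `f ∈ Hom_Λ(P, P')` with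
`coker f ≅ M` is a nonempty Zariski open subset of the affine space `Hom_Λ(P, P')`
(a finite union of nonvanishing loci of polynomial functions). -/
theorem coker_iso_rigid_is_open_dense
    (K : Type) [Field K] [Infinite K]
    (Λ : Type) [Ring Λ] [Algebra K Λ] [FiniteDimensional K Λ]
    -- Λ is hereditary: every (right) ideal is projective
    (hhered : ∀ I : Submodule Λ Λ, Module.Projective Λ I)
    (M P P' : Type)
    [AddCommGroup M] [Module Λ M] [Module K M] [IsScalarTower K Λ M]
    [SMulCommClass Λ K M] [FiniteDimensional K M]
    [AddCommGroup P] [Module Λ P] [Module K P] [IsScalarTower K Λ P]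
    [SMulCommClass Λ K P] [FiniteDimensional K P]
    [AddCommGroup P'] [Module Λ P'] [Module K P'] [IsScalarTower K Λ P']
    [SMulCommClass Λ K P'] [FiniteDimensional K P']
    [FiniteDimensional K (P →ₗ[Λ] P')]
    (hP : Module.Projective Λ P) (hP' : Module.Projective Λ P')
    (hrigid : ExtOneVanish Λ M M)
    (p₀ : P →ₗ[Λ] P') (q : P' →ₗ[Λ] M)
    (hp₀ : Function.Injective p₀) (hq : Function.Surjective q)
    (hexact : LinearMap.range p₀ = LinearMap.ker q) :
    (∃ (m : ℕ) (g : Fin m → ((P →ₗ[Λ] P') → K)),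
      (∀ j, IsPolynomialFun K (P →ₗ[Λ] P') (g j)) ∧
      {f : P →ₗ[Λ] P' | Nonempty ((P' ⧸ LinearMap.range f) ≃ₗ[Λ] M)}
        = {f : P →ₗ[Λ] P' | ∃ j, g j f ≠ 0}) ∧
    {f : P →ₗ[Λ] P' | Nonempty ((P' ⧸ LinearMap.range f) ≃ₗ[Λ] M)}.Nonempty := by
  classical
  -- the canonical isomorphism coming from the given presentation
  have hne : {f : P →ₗ[Λ] P' | Nonempty ((P' ⧸ LinearMap.range f) ≃ₗ[Λ] M)}.Nonempty := by
    refine ⟨p₀, ⟨?_⟩⟩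
    exact (Submodule.quotEquivOfEq _ _ hexact).trans (q.quotKerEquivOfSurjective hq)
  -- finite-dimensionality of the Hom spaces
  let rsW : (P' →ₗ[Λ] M) →ₗ[K] (P' →ₗ[K] M) :=
    { toFun := fun φ => φ.restrictScalars K
      map_add' := fun _ _ => rfl
      map_smul' := fun _ _ => rfl }
  let rsL : (P →ₗ[Λ] M) →ₗ[K] (P →ₗ[K] M) :=
    { toFun := fun φ => φ.restrictScalars K
      map_add' := fun _ _ => rfl
      map_smul' := fun _ _ => rfl }
  have hrsWinj : Function.Injective rsW := fun φ ψ h =>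
    LinearMap.ext fun x => DFunLike.congr_fun h x
  have hrsLinj : Function.Injective rsL := fun φ ψ h =>
    LinearMap.ext fun x => DFunLike.congr_fun h x
  haveI : FiniteDimensional K (P' →ₗ[Λ] M) := FiniteDimensional.of_injective rsW hrsWinj
  haveI : FiniteDimensional K (P →ₗ[Λ] M) := FiniteDimensional.of_injective rsL hrsLinj
  -- dimensions and bases
  set n1 := Module.finrank K P with hn1
  set n2 := Module.finrank K P' with hn2
  set mu := Module.finrank K M with hmu
  set w := Module.finrank K (P' →ₗ[Λ] M) with hw
  set lL := Module.finrank K (P →ₗ[Λ] M) with hlL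
  let bP : Basis (Fin n1) K P := Module.finBasis K P
  let bP' : Basis (Fin n2) K P' := Module.finBasis K P'
  let bM : Basis (Fin mu) K M := Module.finBasis K M
  let bW : Basis (Fin w) K (P' →ₗ[Λ] M) := Module.finBasis K (P' →ₗ[Λ] M)
  let bL : Basis (Fin lL) K (P →ₗ[Λ] M) := Module.finBasis K (P →ₗ[Λ] M)
  -- composition with f, as a K-linear map on Hom spaces
  let comR : (P →ₗ[Λ] P') → ((P' →ₗ[Λ] M) →ₗ[K] (P →ₗ[Λ] M)) := fun f =>
    { toFun := fun φ => φ.comp f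
      map_add' := fun φ ψ => by ext x; simp
      map_smul' := fun c φ => by ext x; simp }
  -- matrices
  let Af : (P →ₗ[Λ] P') → Matrix (Fin n2) (Fin n1) K := fun f =>
    LinearMap.toMatrix bP bP' (f.restrictScalars K)
  let Bf : (P →ₗ[Λ] P') → Matrix (Fin lL) (Fin w) K := fun f =>
    LinearMap.toMatrix bW bL (comR f)
  let MatPhiL : (P' →ₗ[Λ] M) →ₗ[K] Matrix (Fin mu) (Fin n2) K :=
    (LinearMap.toMatrix bP' bM).toLinearMap.comp rsW
  let matW : Fin w → Matrix (Fin mu) (Fin n2) K := fun r => MatPhiL (bW r)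
  -- entries as polynomial functions
  have haP : ∀ k j, (fun f => Af f k j) ∈ polyAlg K (P →ₗ[Λ] P') := by
    intro k j
    refine linear_mem_polyAlg ⟨?_, ?_⟩
    · intro x y
      have h : (x + y).restrictScalars K = x.restrictScalars K + y.restrictScalars K := rfl
      show Af (x + y) k j = _
      simp only [Af, h, map_add]
      rfl
    · intro c x
      have h : (c • x).restrictScalars K = c • x.restrictScalars K := rfl
      show Af (c • x) k j = _
      simp only [Af, h, map_smul]
      rfl
  have hbP : ∀ s t, (fun f => Bf f s t) ∈ polyAlg K (P →ₗ[Λ] P') := by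
    intro s t
    refine linear_mem_polyAlg ⟨?_, ?_⟩
    · intro x y
      have h : comR (x + y) = comR x + comR y := by
        refine LinearMap.ext fun φ => LinearMap.ext fun z => ?_
        simp [comR]
      show Bf (x + y) s t = _
      simp only [Bf, h, map_add]
      rfl
    · intro c x
      have h : comR (c • x) = c • comR x := by
        refine LinearMap.ext fun φ => LinearMap.ext fun z => ?_
        simp only [comR, LinearMap.coe_mk, AddHom.coe_mk, LinearMap.comp_apply,
          LinearMap.smul_apply, LinearMap.coe_smul]
        exact LinearMap.map_smul_of_tower φ c (x z)
      show Bf (c • x) s t = _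
      simp only [Bf, h, map_smul]
      rfl
  -- the coefficient ring
  set PA : Subalgebra K ((P →ₗ[Λ] P') → K) := polyAlg K (P →ₗ[Λ] P') with hPA
  let aPm : Matrix (Fin n2) (Fin n1) PA := Matrix.of fun k j => ⟨fun f => Af f k j, haP k j⟩
  let Bpa : Matrix (Fin lL) (Fin w) PA := Matrix.of fun s t => ⟨fun f => Bf f s t, hbP s t⟩
  let mWpa : Fin w → Matrix (Fin mu) (Fin n2) PA := fun r =>
    (matW r).map (algebraMap K PA)
  -- evaluation at f
  let evf : (P →ₗ[Λ] P') → (PA →+* K) := fun f =>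
    (Pi.evalRingHom (fun _ => K) f).comp (Subalgebra.val PA).toRingHom
  have hBfmap : ∀ f, Bpa.map (evf f) = Bf f := fun f => rfl
  -- the polynomials
  let QI : (Fin lL → Fin w) → MvPolynomial (iotaT n1 n2 mu w) PA := fun I =>
    QIpoly aPm Bpa mWpa I
  let Qf : (Fin lL → Fin w) → (P →ₗ[Λ] P') → MvPolynomial (iotaT n1 n2 mu w) K :=
    fun I f => MvPolynomial.map (evf f) (QI I)
  -- kernel vectors at the K-level
  let vK : (Fin lL → Fin w) → (P →ₗ[Λ] P') → Fin w → Fin w → K := fun I f j =>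
    kerVec (Bf f) I j
  have hvK : ∀ I f j r, evf f (kerVec Bpa I j r) = vK I f j r := by
    intro I f j r
    have := congrFun (kerVec_map (evf f) Bpa I j) r
    rw [this, hBfmap]
  -- the generic elements
  let phiT : (Fin lL → Fin w) → (P →ₗ[Λ] P') → (iotaT n1 n2 mu w → K) → (P' →ₗ[Λ] M) :=
    fun I f a => bW.equivFun.symm (fun r => ∑ j, a (Sum.inr (Sum.inl j)) * vK I f j r)
  let uM : (iotaT n1 n2 mu w → K) → Matrix (Fin n1) (Fin n2) K := fun a =>
    Matrix.of fun i k => a (Sum.inl (i, k))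
  let sM : (iotaT n1 n2 mu w → K) → Matrix (Fin n2) (Fin mu) K := fun a =>
    Matrix.of fun k b => a (Sum.inr (Sum.inr (k, b)))
  -- THE EVALUATION IDENTITY
  have EVAL : ∀ (I : Fin lL → Fin w) (f : P →ₗ[Λ] P') (a : iotaT n1 n2 mu w → K),
      MvPolynomial.eval a (Qf I f)
        = ((uM a * Af f).det) * ((MatPhiL (phiT I f a) * sM a).det) := by
    intro I f a
    let ψ : MvPolynomial (iotaT n1 n2 mu w) PA →+* K :=
      (MvPolynomial.eval a).comp (MvPolynomial.map (evf f))
    have hψX : ∀ v : iotaT n1 n2 mu w, ψ (MvPolynomial.X v) = a v := by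
      intro v
      simp [ψ, MvPolynomial.map_X, MvPolynomial.eval_X]
    have hψC : ∀ c : PA, ψ (MvPolynomial.C c) = evf f c := by
      intro c
      simp [ψ, MvPolynomial.map_C, MvPolynomial.eval_C]
    have hψ : MvPolynomial.eval a (Qf I f) = ψ (QI I) := rfl
    rw [hψ]
    rw [show QI I = QIpoly aPm Bpa mWpa I from rfl]
    rw [QIpoly_hom ψ aPm Bpa mWpa I]
    have hU : Umt.map ψ = uM a := by
      ext i k
      rw [Matrix.map_apply]
      exact hψX _
    have hA : (aPm.map MvPolynomial.C).map ψ = Af f := by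
      ext k j
      rw [Matrix.map_apply, Matrix.map_apply, hψC]
      rfl
    have hS : Smt.map ψ = sM a := by
      ext k b
      rw [Matrix.map_apply]
      exact hψX _
    have hmWev : ∀ r x1 x2, evf f (mWpa r x1 x2) = matW r x1 x2 := by
      intro r x1 x2
      rfl
    have hphi : MatPhiL (phiT I f a)
        = ∑ r, (∑ j, a (Sum.inr (Sum.inl j)) * vK I f j r) • matW r := by
      have h1 : phiT I f a
          = ∑ r, (∑ j, a (Sum.inr (Sum.inl j)) * vK I f j r) • bW r := by
        exact bW.equivFun_symm_apply _
      rw [h1, map_sum]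
      refine Finset.sum_congr rfl fun r _ => ?_
      rw [map_smul]
    have hT : (Tmt Bpa mWpa I).map ψ = MatPhiL (phiT I f a) := by
      ext x1 x2
      rw [Matrix.map_apply]
      rw [show (Tmt Bpa mWpa I) x1 x2 = ∑ j, MvPolynomial.X (Sum.inr (Sum.inl j))
        * MvPolynomial.C (∑ r, kerVec Bpa I j r * mWpa r x1 x2) from rfl]
      rw [map_sum]
      have hterm : ∀ j, ψ (MvPolynomial.X (Sum.inr (Sum.inl j))
          * MvPolynomial.C (∑ r, kerVec Bpa I j r * mWpa r x1 x2))
          = a (Sum.inr (Sum.inl j)) * (∑ r, vK I f j r * matW r x1 x2) := by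
        intro j
        rw [map_mul, hψX, hψC, map_sum]
        congr 1
        refine Finset.sum_congr rfl fun r _ => ?_
        rw [map_mul, hvK, hmWev]
      rw [Finset.sum_congr rfl fun j _ => hterm j]
      rw [hphi, Matrix.sum_apply]
      simp only [Matrix.smul_apply, smul_eq_mul, Finset.sum_mul]
      rw [Finset.sum_comm]
      refine Finset.sum_congr rfl fun j _ => ?_
      rw [Finset.mul_sum]
      refine Finset.sum_congr rfl fun r _ => ?_
      ring
    rw [hU, hA, hS, hT]
  -- coker f ≅ M implies f (K-)injective, and the exact-sequence dimension count
  have hrngp₀ : (LinearMap.range p₀).restrictScalars K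
      = LinearMap.range (p₀.restrictScalars K) := by
    ext x
    simp [LinearMap.mem_range]
  have hn : n1 + mu = n2 := by
    have h1 := LinearMap.finrank_range_add_finrank_ker (q.restrictScalars K)
    have hr : LinearMap.range (q.restrictScalars K) = ⊤ :=
      LinearMap.range_eq_top.mpr (by rw [LinearMap.coe_restrictScalars]; exact hq)
    have hk : LinearMap.ker (q.restrictScalars K)
        = LinearMap.range (p₀.restrictScalars K) := by
      rw [LinearMap.ker_restrictScalars, ← hexact, hrngp₀]
    have h2 := LinearMap.finrank_range_add_finrank_ker (p₀.restrictScalars K)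
    have hkp : LinearMap.ker (p₀.restrictScalars K) = ⊥ :=
      LinearMap.ker_eq_bot.mpr (by rw [LinearMap.coe_restrictScalars]; exact hp₀)
    rw [hr, hk, finrank_top] at h1
    rw [hkp, finrank_bot] at h2
    omega
  have hrng : ∀ f : P →ₗ[Λ] P', (LinearMap.range f).restrictScalars K
      = LinearMap.range (f.restrictScalars K) := by
    intro f
    ext x
    simp [LinearMap.mem_range]
  have hkerphi : ∀ (φ : P' →ₗ[Λ] M), (LinearMap.ker φ).restrictScalars K
      = LinearMap.ker (φ.restrictScalars K) := by
    intro φ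
    rw [LinearMap.ker_restrictScalars]
  have HINJ : ∀ f : P →ₗ[Λ] P', Nonempty ((P' ⧸ LinearMap.range f) ≃ₗ[Λ] M) →
      Function.Injective f := by
    rintro f ⟨e⟩
    set φ0 : P' →ₗ[Λ] M := e.toLinearMap.comp (LinearMap.range f).mkQ with hφ0
    have hker : LinearMap.ker φ0 = LinearMap.range f := by
      ext x
      rw [LinearMap.mem_ker]
      show e (Submodule.Quotient.mk x) = 0 ↔ _
      rw [LinearEquiv.map_eq_zero_iff, Submodule.Quotient.mk_eq_zero]
    have hsurj0 : Function.Surjective φ0 :=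
      e.surjective.comp (Submodule.mkQ_surjective _)
    have h1 := LinearMap.finrank_range_add_finrank_ker (φ0.restrictScalars K)
    have hr0 : LinearMap.range (φ0.restrictScalars K) = ⊤ :=
      LinearMap.range_eq_top.mpr (by rw [LinearMap.coe_restrictScalars]; exact hsurj0)
    rw [hr0, finrank_top, ← hkerphi φ0, hker, hrng f] at h1
    have h2 := LinearMap.finrank_range_add_finrank_ker (f.restrictScalars K)
    have hker0 : Module.finrank K (LinearMap.ker (f.restrictScalars K)) = 0 := by omega
    have : LinearMap.ker (f.restrictScalars K) = ⊥ :=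
      Submodule.finrank_eq_zero.mp hker0
    have hfi : Function.Injective ⇑(f.restrictScalars K) := LinearMap.ker_eq_bot.mp this
    rwa [LinearMap.coe_restrictScalars] at hfi
  -- FORWARD: membership implies some polynomial evaluates nonzero
  have FWD : ∀ f : P →ₗ[Λ] P', Nonempty ((P' ⧸ LinearMap.range f) ≃ₗ[Λ] M) →
      ∃ I : Fin lL → Fin w, Qf I f ≠ 0 := by
    rintro f ⟨e⟩
    have hfinj : Function.Injective f := HINJ f ⟨e⟩
    set φ0 : P' →ₗ[Λ] M := e.toLinearMap.comp (LinearMap.range f).mkQ with hφ0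
    have hφ0f : φ0.comp f = 0 := by
      ext x
      show e (Submodule.Quotient.mk (f x)) = 0
      rw [show (Submodule.Quotient.mk (f x) : P' ⧸ LinearMap.range f) = 0 from
        (Submodule.Quotient.mk_eq_zero _).mpr ⟨x, rfl⟩, map_zero]
    have hsurj0 : Function.Surjective φ0 := e.surjective.comp (Submodule.mkQ_surjective _)
    have hcomRsurj : Function.Surjective (comR f) := by
      intro h
      obtain ⟨φ, hφ⟩ := lift_of_rigid hrigid f hfinj e h
      exact ⟨φ, hφ⟩
    have hmv : ∀ (φ : P' →ₗ[Λ] M), (Bf f).mulVec (bW.repr φ) = (bL.repr ((comR f) φ)) :=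
      fun φ => LinearMap.toMatrix_mulVec_repr bW bL (comR f) φ
    have hmvsurj : Function.Surjective (Bf f).mulVec := by
      intro y
      obtain ⟨φ, hφ⟩ := hcomRsurj (bL.equivFun.symm y)
      refine ⟨bW.repr φ, ?_⟩
      rw [hmv, hφ, ← bL.equivFun_apply, bL.equivFun.apply_symm_apply]
    obtain ⟨I, hIinj, hIdet⟩ := exists_good_cols (Bf f) hmvsurj
    have hu0 : (Bf f).mulVec (bW.repr φ0) = 0 := by
      rw [hmv]
      have h00 : comR f φ0 = 0 := hφ0f
      rw [h00]
      simp
    obtain ⟨t0, ht0⟩ := kerVec_span (Bf f) I hIinj hIdet (bW.repr φ0) hu0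
    have hkerf : LinearMap.ker (f.restrictScalars K) = ⊥ :=
      LinearMap.ker_eq_bot.mpr (by rw [LinearMap.coe_restrictScalars]; exact hfinj)
    obtain ⟨uL, huL⟩ := (f.restrictScalars K).exists_leftInverse_of_injective hkerf
    obtain ⟨sL, hsL⟩ := (φ0.restrictScalars K).exists_rightInverse_of_surjective
      (LinearMap.range_eq_top.mpr (by rw [LinearMap.coe_restrictScalars]; exact hsurj0))
    refine ⟨I, ?_⟩
    set a0 : iotaT n1 n2 mu w → K := fun v =>
      Sum.rec (fun ik => LinearMap.toMatrix bP' bP uL ik.1 ik.2)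
        (Sum.rec (fun j => t0 j) (fun kb => LinearMap.toMatrix bM bP' sL kb.1 kb.2)) v
      with ha0
    intro h0
    have heval := EVAL I f a0
    rw [h0, map_zero] at heval
    have hudet : uM a0 * Af f = 1 := by
      have h1 : uM a0 = LinearMap.toMatrix bP' bP uL := rfl
      have h2 : Af f = LinearMap.toMatrix bP bP' (f.restrictScalars K) := rfl
      rw [h1, h2, ← LinearMap.toMatrix_comp bP bP' bP uL (f.restrictScalars K), huL,
        LinearMap.toMatrix_id]
    have hphieq : phiT I f a0 = φ0 := by
      have hfun : (fun r => ∑ j, a0 (Sum.inr (Sum.inl j)) * vK I f j r)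
          = ⇑(bW.repr φ0) := by
        funext r
        exact (ht0 r).symm
      show bW.equivFun.symm (fun r => ∑ j, a0 (Sum.inr (Sum.inl j)) * vK I f j r) = φ0
      rw [hfun, ← bW.equivFun_apply, bW.equivFun.symm_apply_apply]
    have hphidet : MatPhiL (phiT I f a0) * sM a0 = 1 := by
      rw [hphieq]
      have h1 : MatPhiL φ0 = LinearMap.toMatrix bP' bM (φ0.restrictScalars K) := rfl
      have h2 : sM a0 = LinearMap.toMatrix bM bP' sL := rfl
      rw [h1, h2, ← LinearMap.toMatrix_comp bM bP' bM (φ0.restrictScalars K) sL, hsL,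
        LinearMap.toMatrix_id]
    rw [hudet, hphidet] at heval
    simp at heval
  -- BACKWARD
  have BWD : ∀ (I : Fin lL → Fin w) (f : P →ₗ[Λ] P'), Qf I f ≠ 0 →
      Nonempty ((P' ⧸ LinearMap.range f) ≃ₗ[Λ] M) := by
    intro I f hQ
    have hex : ∃ a, MvPolynomial.eval a (Qf I f) ≠ 0 := by
      by_contra hall
      push_neg at hall
      apply hQ
      apply MvPolynomial.funext
      intro x
      rw [hall x, map_zero]
    obtain ⟨a, ha⟩ := hex
    rw [EVAL I f a] at ha
    have hd1 : (uM a * Af f).det ≠ 0 := fun h => ha (by rw [h]; ring)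
    have hd2 : (MatPhiL (phiT I f a) * sM a).det ≠ 0 := fun h => ha (by rw [h]; ring)
    set φt := phiT I f a with hφt
    -- f is injective
    have hfinjK : Function.Injective ⇑(f.restrictScalars K) := by
      rw [← LinearMap.ker_eq_bot, Submodule.eq_bot_iff]
      intro x hx
      rw [LinearMap.mem_ker] at hx
      have hmv0 : (uM a * Af f).mulVec (bP.repr x) = 0 := by
        rw [← Matrix.mulVec_mulVec]
        have h1 : (Af f).mulVec (bP.repr x) = bP'.repr ((f.restrictScalars K) x) :=
          LinearMap.toMatrix_mulVec_repr bP bP' (f.restrictScalars K) x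
        rw [h1, hx]
        simp
      by_contra hxne
      have hvne : (⇑(bP.repr x) : Fin n1 → K) ≠ 0 := by
        intro h0
        apply hxne
        have hr0 : bP.repr x = 0 := Finsupp.ext fun i => congrFun h0 i
        exact (LinearEquiv.map_eq_zero_iff bP.repr).mp hr0
      exact hd1 (Matrix.exists_mulVec_eq_zero_iff.mp ⟨_, hvne, hmv0⟩)
    -- φt is surjective
    have hφtK : Function.Surjective ⇑(φt.restrictScalars K) := by
      set Gm := MatPhiL φt * sM a with hGm
      have hGdet : IsUnit Gm.det := isUnit_iff_ne_zero.mpr hd2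
      intro y
      set cmp := (φt.restrictScalars K).comp (Matrix.toLin bM bP' (sM a)) with hcmp
      have hmat : LinearMap.toMatrix bM bM cmp = Gm := by
        rw [hcmp, LinearMap.toMatrix_comp bM bP' bM, LinearMap.toMatrix_toLin]
        rfl
      set z := Gm⁻¹.mulVec (bM.repr y) with hz
      refine ⟨(Matrix.toLin bM bP' (sM a)) (bM.equivFun.symm z), ?_⟩
      have h1 : (LinearMap.toMatrix bM bM cmp).mulVec (bM.repr (bM.equivFun.symm z))
          = bM.repr (cmp (bM.equivFun.symm z)) :=
        LinearMap.toMatrix_mulVec_repr bM bM cmp (bM.equivFun.symm z)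
      rw [hmat] at h1
      have h2 : ⇑(bM.repr (bM.equivFun.symm z)) = z := by
        rw [← bM.equivFun_apply, bM.equivFun.apply_symm_apply]
      rw [h2] at h1
      have h3 : Gm.mulVec z = ⇑(bM.repr y) := by
        rw [hz, Matrix.mulVec_mulVec, Matrix.mul_nonsing_inv _ hGdet, Matrix.one_mulVec]
      have h4 : bM.repr (cmp (bM.equivFun.symm z)) = bM.repr y :=
        DFunLike.coe_injective (h1.symm.trans h3)
      exact bM.repr.injective h4
    have hφtsurj : Function.Surjective ⇑φt := by
      have := hφtK
      rwa [LinearMap.coe_restrictScalars] at this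
    -- φt kills the image of f
    have hker0 : (comR f) φt = 0 := by
      have hreprφt : ⇑(bW.repr φt)
          = (fun r => ∑ j, a (Sum.inr (Sum.inl j)) * vK I f j r) := by
        show ⇑(bW.repr (bW.equivFun.symm _)) = _
        rw [← bW.equivFun_apply, bW.equivFun.apply_symm_apply]
      have h1 : (Bf f).mulVec (bW.repr φt) = bL.repr ((comR f) φt) :=
        LinearMap.toMatrix_mulVec_repr bW bL (comR f) φt
      have h2 : (Bf f).mulVec (bW.repr φt) = 0 := by
        rw [hreprφt]
        have hveq : (fun r => ∑ j, a (Sum.inr (Sum.inl j)) * vK I f j r)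
            = ∑ j, a (Sum.inr (Sum.inl j)) • vK I f j := by
          funext r
          simp [Finset.sum_apply]
        rw [hveq]
        have hlin : (Bf f).mulVecLin (∑ j, a (Sum.inr (Sum.inl j)) • vK I f j) = 0 := by
          rw [map_sum]
          simp only [_root_.map_smul, Matrix.mulVecLin_apply]
          have hker : ∀ j, (Bf f).mulVec (vK I f j) = 0 :=
            fun j => mulVec_kerVec (Bf f) I j
          simp [hker]
        rw [← Matrix.mulVecLin_apply]
        exact hlin
      have h3 : ⇑(bL.repr ((comR f) φt)) = 0 := h1.symm.trans h2
      have h4 : bL.repr ((comR f) φt) = 0 := Finsupp.ext fun i => congrFun h3 i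
      exact (LinearEquiv.map_eq_zero_iff bL.repr).mp h4
    have hle : LinearMap.range f ≤ LinearMap.ker φt := by
      rintro x ⟨y, rfl⟩
      rw [LinearMap.mem_ker]
      exact DFunLike.congr_fun hker0 y
    have e1 := LinearMap.finrank_range_add_finrank_ker (f.restrictScalars K)
    rw [LinearMap.ker_eq_bot.mpr hfinjK, finrank_bot] at e1
    have e2 := LinearMap.finrank_range_add_finrank_ker (φt.restrictScalars K)
    rw [LinearMap.range_eq_top.mpr hφtK, finrank_top] at e2
    have hle' : (LinearMap.range f).restrictScalars K
        ≤ (LinearMap.ker φt).restrictScalars K := hle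
    have hfr1 : Module.finrank K ((LinearMap.range f).restrictScalars K) = n1 := by
      rw [hrng f]
      omega
    have hfr2 : Module.finrank K ((LinearMap.ker φt).restrictScalars K) + mu = n2 := by
      rw [hkerphi φt]
      omega
    have heq' : (LinearMap.range f).restrictScalars K
        = (LinearMap.ker φt).restrictScalars K :=
      Submodule.eq_of_le_of_finrank_le hle' (by omega)
    have heq : LinearMap.range f = LinearMap.ker φt :=
      Submodule.restrictScalars_injective K _ _ heq'
    exact ⟨(Submodule.quotEquivOfEq _ _ heq).trans (φt.quotKerEquivOfSurjective hφtsurj)⟩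
  -- degree bound
  have DEG : ∀ I f, (Qf I f).totalDegree ≤ n1 * 1 + mu * 2 := by
    intro I f
    refine le_trans ?_ (QIpoly_totalDegree aPm Bpa mWpa I)
    exact totalDegree_map_le' _ _
  -- assemble
  set Dg := n1 * 1 + mu * 2 with hDg
  let toFS : (iotaT n1 n2 mu w → Fin (Dg + 1)) → (iotaT n1 n2 mu w →₀ ℕ) := fun e =>
    Finsupp.equivFunOnFinite.symm (fun v => (e v : ℕ))
  let Jty := (Fin lL → Fin w) × (iotaT n1 n2 mu w → Fin (Dg + 1))
  let gfun : Jty → ((P →ₗ[Λ] P') → K) := fun Ie =>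
    ((QI Ie.1).coeff (toFS Ie.2) : PA).1
  have hgcoeff : ∀ (Ie : Jty) (f : P →ₗ[Λ] P'),
      gfun Ie f = (Qf Ie.1 f).coeff (toFS Ie.2) := by
    intro Ie f
    rw [MvPolynomial.coeff_map]
    rfl
  have KEY : ∀ f : P →ₗ[Λ] P',
      Nonempty ((P' ⧸ LinearMap.range f) ≃ₗ[Λ] M) ↔ ∃ Ie : Jty, gfun Ie f ≠ 0 := by
    intro f
    constructor
    · intro hf
      obtain ⟨I, hQ⟩ := FWD f hf
      obtain ⟨d, hd⟩ := MvPolynomial.ne_zero_iff.mp hQ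
      have hdsup : d ∈ (Qf I f).support := MvPolynomial.mem_support_iff.mpr hd
      have hdsum : (d.sum fun _ e => e) ≤ Dg := le_trans (MvPolynomial.le_totalDegree hdsup)
        (DEG I f)
      have hdv : ∀ v, d v ≤ Dg := by
        intro v
        by_cases hv : d v = 0
        · omega
        · have hvmem : v ∈ d.support := Finsupp.mem_support_iff.mpr hv
          have : d v ≤ d.sum fun _ e => e :=
            Finset.single_le_sum (f := fun v => d v) (fun _ _ => Nat.zero_le _) hvmem
          omega
      refine ⟨⟨I, fun v => ⟨d v, by have := hdv v; omega⟩⟩, ?_⟩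
      rw [hgcoeff]
      have : toFS (fun v => (⟨d v, by have := hdv v; omega⟩ : Fin (Dg + 1))) = d := by
        apply Finsupp.ext
        intro v
        simp [toFS]
      rw [this]
      exact hd
    · rintro ⟨⟨I, e⟩, hg⟩
      rw [hgcoeff] at hg
      have hQ : Qf I f ≠ 0 := fun h0 => hg (by rw [h0]; simp)
      exact BWD I f hQ
  refine ⟨⟨Fintype.card Jty, fun j => gfun ((Fintype.equivFin Jty).symm j), ?_, ?_⟩, hne⟩
  · intro j
    exact isPolynomialFun_of_mem ((QI ((Fintype.equivFin Jty).symm j).1).coeff _).2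
  · ext f
    simp only [Set.mem_setOf_eq]
    rw [KEY f]
    constructor
    · rintro ⟨Ie, hIe⟩
      exact ⟨Fintype.equivFin Jty Ie, by simpa using hIe⟩
    · rintro ⟨j, hj⟩
      exact ⟨(Fintype.equivFin Jty).symm j, hj⟩
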